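/- Consider exact natural policy gradient on a finite MDP with $\gamma \in (0,1)$: $\pi_{t+1}(a|s) = \pi_t(a|s)\exp(\beta_t Q^{\pi_t}(s,a)) / \sum_{a'}\pi_t(a'|s)\exp(\beta_t Q^{\pi_t}(s,a'))$, starting from the uniform policy $\pi_0$, with rewards in $[0,1]$. If the stepsizes satisfy $\beta_t \ge \log(1/\min_s \pi_t(a_{t,s}|s))/\gamma^{2t-1}$ for all $t$, where $a_{t,s} \in \arg\max_a Q^{\pi_t}(s,a)$, then $\|Q^* - Q^{\pi_T}\|_\infty \le \frac{3\gamma^T}{(1-\gamma)^2}$. -/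

import Mathlib

open Finset

lemma wsum_le {A : Type} [Fintype A] (w q : A → ℝ) (B : ℝ)
    (hw : ∀ a, 0 ≤ w a) (hs : ∑ a, w a = 1) (hq : ∀ a, q a ≤ B) :
    ∑ a, w a * q a ≤ B := by
  calc ∑ a, w a * q a ≤ ∑ a, w a * B :=
        Finset.sum_le_sum fun a _ => mul_le_mul_of_nonneg_left (hq a) (hw a)
    _ = B := by rw [← Finset.sum_mul, hs, one_mul]

lemma le_wsum {A : Type} [Fintype A] (w q : A → ℝ) (B : ℝ)
    (hw : ∀ a, 0 ≤ w a) (hs : ∑ a, w a = 1) (hq : ∀ a, B ≤ q a) :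
    B ≤ ∑ a, w a * q a := by
  calc B = ∑ a, w a * B := by rw [← Finset.sum_mul, hs, one_mul]
    _ ≤ ∑ a, w a * q a :=
        Finset.sum_le_sum fun a _ => mul_le_mul_of_nonneg_left (hq a) (hw a)

lemma contract_nonneg {g X : ℝ} (h : g * X ≤ X) (h1 : g < 1) : 0 ≤ X := by
  nlinarith

lemma contract_ub {g X B : ℝ} (h : X ≤ B + g * X) (h1 : g < 1) (hB : 0 ≤ B) :
    X ≤ B / (1 - g) := by
  rw [le_div_iff₀ (by linarith)]
  nlinarith

lemma cheb {A : Type} [Fintype A] (p q f : A → ℝ)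
    (hp : ∀ a, 0 ≤ p a) (hs : ∑ a, p a = 1)
    (hmono : ∀ a b, q a ≤ q b → f a ≤ f b) :
    (∑ a, p a * q a) * (∑ a, p a * f a) ≤ ∑ a, p a * (q a * f a) := by
  have key : 0 ≤ ∑ a : A, ∑ b : A, p a * p b * ((q a - q b) * (f a - f b)) := by
    apply Finset.sum_nonneg; intro a _; apply Finset.sum_nonneg; intro b _
    apply mul_nonneg (mul_nonneg (hp a) (hp b))
    rcases le_total (q a) (q b) with h | h
    · have := hmono a b h; nlinarith
    · have := hmono b a h; nlinarith
  have expand : ∑ a : A, ∑ b : A, p a * p b * ((q a - q b) * (f a - f b))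
      = (∑ a, p a * (q a * f a)) * (∑ a, p a) + (∑ a, p a) * (∑ a, p a * (q a * f a))
        - (∑ a, p a * q a) * (∑ a, p a * f a) - (∑ a, p a * f a) * (∑ a, p a * q a) := by
    rw [Finset.sum_mul_sum, Finset.sum_mul_sum, Finset.sum_mul_sum, Finset.sum_mul_sum]
    simp only [← Finset.sum_add_distrib, ← Finset.sum_sub_distrib]
    apply Finset.sum_congr rfl; intro a _
    apply Finset.sum_congr rfl; intro b _
    ring
  rw [expand, hs] at key
  nlinarith [key]

lemma gap_aux (c L x : ℝ) (hc : 0 < c) (hL : 0 < L) (hx : c ≤ x) :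
    x * Real.exp (-(L * x / c)) * (1 - Real.exp (-L)) ≤ c * Real.exp (-L) := by
  have hx0 : 0 < x := lt_of_lt_of_le hc hx
  have hexppos := Real.exp_pos (-(L * x / c))
  have hEL1 : Real.exp (-L) < 1 := Real.exp_lt_one_iff.2 (by linarith)
  have hEL0 : 0 < Real.exp (-L) := Real.exp_pos _
  rcases le_total 1 L with h1 | h1
  · have hy : 1 ≤ x / c := (one_le_div hc).2 hx
    have h3 : x / c ≤ Real.exp (L * x / c - L) := by
      have h4 : x / c - 1 + 1 ≤ Real.exp (x / c - 1) := Real.add_one_le_exp _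
      have h5 : Real.exp (x / c - 1) ≤ Real.exp (L * x / c - L) := by
        apply Real.exp_le_exp.2
        rw [mul_div_assoc]
        nlinarith [mul_nonneg (sub_nonneg.2 h1) (sub_nonneg.2 hy)]
      linarith
    have h6 : x ≤ Real.exp (L * x / c - L) * c := (div_le_iff₀ hc).1 h3
    have h7 : x * Real.exp (-(L * x / c)) ≤ c * Real.exp (-L) := by
      calc x * Real.exp (-(L * x / c))
          ≤ Real.exp (L * x / c - L) * c * Real.exp (-(L * x / c)) :=
            mul_le_mul_of_nonneg_right h6 (le_of_lt hexppos)
        _ = c * (Real.exp (L * x / c - L) * Real.exp (-(L * x / c))) := by ring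
        _ = c * Real.exp (-L) := by rw [← Real.exp_add]; ring_nf
    have h8 : x * Real.exp (-(L * x / c)) * (1 - Real.exp (-L)) ≤ x * Real.exp (-(L * x / c)) * 1 :=
      mul_le_mul_of_nonneg_left (by linarith) (by positivity)
    linarith
  · set z := L * x / c with hz
    have hz0 : 0 < z := by positivity
    have hzx : x = c / L * z := by rw [hz]; field_simp
    have h3 : z * Real.exp (-z) ≤ Real.exp (-1) := by
      have h4 : z ≤ Real.exp (z - 1) := by
        have := Real.add_one_le_exp (z - 1); linarith
      calc z * Real.exp (-z) ≤ Real.exp (z - 1) * Real.exp (-z) :=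
            mul_le_mul_of_nonneg_right h4 (le_of_lt (Real.exp_pos _))
        _ = Real.exp (-1) := by rw [← Real.exp_add]; ring_nf
    have h5 : x * Real.exp (-z) ≤ c / L * Real.exp (-1) := by
      rw [hzx, mul_assoc]
      exact mul_le_mul_of_nonneg_left h3 (by positivity)
    have h6 : 1 - Real.exp (-L) ≤ L := by
      have := Real.add_one_le_exp (-L); linarith
    have h7 : Real.exp (-1) ≤ Real.exp (-L) := Real.exp_le_exp.2 (by linarith)
    have h8 : 0 ≤ 1 - Real.exp (-L) := by linarith
    calc x * Real.exp (-z) * (1 - Real.exp (-L)) ≤ (c / L * Real.exp (-1)) * (1 - Real.exp (-L)) :=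
          mul_le_mul_of_nonneg_right h5 h8
      _ ≤ (c / L * Real.exp (-1)) * L := by
          apply mul_le_mul_of_nonneg_left h6 (by positivity)
      _ = c * Real.exp (-1) := by field_simp
      _ ≤ c * Real.exp (-L) := mul_le_mul_of_nonneg_left h7 (le_of_lt hc)

lemma softmax_improve {A : Type} [Fintype A] [Nonempty A] (p q : A → ℝ) (βt : ℝ)
    (hp : ∀ a, 0 < p a) (hsum : ∑ a, p a = 1) (hβ0 : 0 ≤ βt) :
    ∑ a, p a * q a ≤ ∑ a, p a * Real.exp (βt * q a) / (∑ a', p a' * Real.exp (βt * q a')) * q a := by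
  set Z := ∑ a', p a' * Real.exp (βt * q a') with hZ
  have hZpos : 0 < Z := Finset.sum_pos (fun a _ => mul_pos (hp a) (Real.exp_pos _)) univ_nonempty
  have hrw : ∑ a, p a * Real.exp (βt * q a) / Z * q a
      = (∑ a, p a * (q a * Real.exp (βt * q a))) / Z := by
    have h9 : ∀ a : A, p a * Real.exp (βt * q a) / Z * q a
        = p a * (q a * Real.exp (βt * q a)) / Z := fun a => by ring
    rw [Finset.sum_congr rfl (fun a _ => h9 a), ← Finset.sum_div]
  rw [hrw, le_div_iff₀ hZpos, hZ]
  exact cheb p q (fun a => Real.exp (βt * q a)) (fun a => (hp a).le) hsum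
    (fun a b h => Real.exp_le_exp.2 (mul_le_mul_of_nonneg_left h hβ0))

lemma core_gap {A : Type} [Fintype A] [Nonempty A]
    (p : A → ℝ) (x : A → ℝ) (astar : A) (βt c m L : ℝ)
    (hp : ∀ a, 0 < p a) (hsum : ∑ a, p a = 1)
    (hx0 : ∀ a, 0 ≤ x a) (hxstar : x astar = 0)
    (hc : 0 < c) (hm : 0 < m) (hm1 : m < 1)
    (hmp : m ≤ p astar)
    (hL : L = Real.log (1/m))
    (hβ : L / c ≤ βt) :
    ∑ a, p a * Real.exp (-(βt * x a)) * x a ≤ c * ∑ a, p a * Real.exp (-(βt * x a)) := by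
  classical
  have hLpos : 0 < L := by rw [hL]; exact Real.log_pos ((one_lt_div hm).2 hm1)
  have hmexp : Real.exp (-L) = m := by
    rw [hL, one_div, Real.log_inv, neg_neg, Real.exp_log hm]
  have h1m : 0 < 1 - m := by linarith
  set F : A → ℝ := fun a => Real.exp (-(βt * x a)) with hF
  have hFpos : ∀ a, 0 < F a := fun a => Real.exp_pos _
  have hFstar : F astar = 1 := by rw [hF]; simp [hxstar]
  have hFb : ∀ a, F a ≤ Real.exp (-(L * x a / c)) := by
    intro a
    apply Real.exp_le_exp.2
    have h1 : L / c * x a ≤ βt * x a := mul_le_mul_of_nonneg_right hβ (hx0 a)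
    have h2 : L * x a / c = L / c * x a := by ring
    simp only [neg_le_neg_iff]
    linarith
  have hsplit := Finset.sum_filter_add_sum_filter_not (univ : Finset A) (fun a => x a ≤ c)
    (fun a => p a * F a * x a)
  have hsplitF := Finset.sum_filter_add_sum_filter_not (univ : Finset A) (fun a => x a ≤ c)
    (fun a => p a * F a)
  set S1 := univ.filter (fun a => x a ≤ c) with hS1
  set S2 := univ.filter (fun a => ¬ x a ≤ c) with hS2
  have hstar1 : astar ∈ S1 := by rw [hS1]; simp [hxstar, hc.le]
  -- S1 bound
  have e1 : ∑ a ∈ S1, p a * F a * x a = ∑ a ∈ S1 \ {astar}, p a * F a * x a := by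
    rw [Finset.sum_eq_sum_sdiff_singleton_add hstar1 (fun a => p a * F a * x a), hxstar]; ring
  have e2 : ∑ a ∈ S1, p a * F a = (∑ a ∈ S1 \ {astar}, p a * F a) + p astar := by
    rw [Finset.sum_eq_sum_sdiff_singleton_add hstar1 (fun a => p a * F a), hFstar]; ring
  have e3 : ∑ a ∈ S1 \ {astar}, p a * F a * x a ≤ ∑ a ∈ S1 \ {astar}, p a * F a * c := by
    apply Finset.sum_le_sum
    intro a ha
    have hax : x a ≤ c := by
      have := (Finset.mem_sdiff.1 ha).1
      rw [hS1] at this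
      exact (Finset.mem_filter.1 this).2
    exact mul_le_mul_of_nonneg_left hax (mul_nonneg (hp a).le (hFpos a).le)
  have e4 : ∑ a ∈ S1 \ {astar}, p a * F a * c = (∑ a ∈ S1 \ {astar}, p a * F a) * c :=
    (Finset.sum_mul _ _ _).symm
  have e5 : (∑ a ∈ S1 \ {astar}, p a * F a) = (∑ a ∈ S1, p a * F a) - p astar := by
    linarith [e2]
  have hS1b : ∑ a ∈ S1, p a * F a * x a ≤ c * (∑ a ∈ S1, p a * F a) - c * p astar := by
    calc ∑ a ∈ S1, p a * F a * x a = ∑ a ∈ S1 \ {astar}, p a * F a * x a := e1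
      _ ≤ ∑ a ∈ S1 \ {astar}, p a * F a * c := e3
      _ = (∑ a ∈ S1 \ {astar}, p a * F a) * c := e4
      _ = ((∑ a ∈ S1, p a * F a) - p astar) * c := by rw [e5]
      _ = c * (∑ a ∈ S1, p a * F a) - c * p astar := by ring
  -- S2 bound
  have hS2b : ∑ a ∈ S2, p a * F a * x a ≤ c * m := by
    have hub : ∀ a ∈ S2, p a * F a * x a ≤ p a * (c * m / (1 - m)) := by
      intro a ha
      have hax : c < x a := by
        rw [hS2] at ha
        exact lt_of_not_ge (Finset.mem_filter.1 ha).2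
      have g1 : x a * Real.exp (-(L * x a / c)) * (1 - Real.exp (-L)) ≤ c * Real.exp (-L) :=
        gap_aux c L (x a) hc hLpos hax.le
      rw [hmexp] at g1
      have g2 : x a * Real.exp (-(L * x a / c)) ≤ c * m / (1 - m) := by
        rw [le_div_iff₀ h1m]; linarith
      have g3 : F a * x a ≤ x a * Real.exp (-(L * x a / c)) := by
        have := mul_le_mul_of_nonneg_right (hFb a) (hx0 a)
        linarith [this]
      calc p a * F a * x a = p a * (F a * x a) := by ring
        _ ≤ p a * (c * m / (1 - m)) :=
            mul_le_mul_of_nonneg_left (le_trans g3 g2) (hp a).le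
    have hsub : S2 ⊆ univ \ {astar} := by
      intro a ha
      rw [Finset.mem_sdiff, Finset.mem_singleton]
      refine ⟨mem_univ a, ?_⟩
      intro h
      rw [hS2] at ha
      have hax : ¬ x a ≤ c := (Finset.mem_filter.1 ha).2
      rw [h, hxstar] at hax
      exact hax hc.le
    have hmass : ∑ a ∈ S2, p a ≤ 1 - p astar := by
      have h7 : ∑ a ∈ S2, p a ≤ ∑ a ∈ univ \ {astar}, p a :=
        Finset.sum_le_sum_of_subset_of_nonneg hsub (fun i _ _ => (hp i).le)
      have h8 := Finset.sum_eq_sum_sdiff_singleton_add (mem_univ astar) p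
      rw [hsum] at h8
      linarith
    calc ∑ a ∈ S2, p a * F a * x a ≤ ∑ a ∈ S2, p a * (c * m / (1 - m)) :=
          Finset.sum_le_sum hub
      _ = (∑ a ∈ S2, p a) * (c * m / (1 - m)) := by rw [← Finset.sum_mul]
      _ ≤ (1 - p astar) * (c * m / (1 - m)) :=
          mul_le_mul_of_nonneg_right hmass (div_nonneg (mul_nonneg hc.le hm.le) h1m.le)
      _ ≤ (1 - m) * (c * m / (1 - m)) :=
          mul_le_mul_of_nonneg_right (by linarith) (div_nonneg (mul_nonneg hc.le hm.le) h1m.le)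
      _ = c * m := by field_simp
  have hD2 : 0 ≤ ∑ a ∈ S2, p a * F a :=
    Finset.sum_nonneg fun a _ => mul_nonneg (hp a).le (hFpos a).le
  have hcm : c * m ≤ c * p astar := mul_le_mul_of_nonneg_left hmp hc.le
  rw [← hsplit, ← hsplitF]
  have hexpand : c * ((∑ a ∈ S1, p a * F a) + ∑ a ∈ S2, p a * F a)
      = c * (∑ a ∈ S1, p a * F a) + c * (∑ a ∈ S2, p a * F a) := by ring
  have hcd2 : 0 ≤ c * ∑ a ∈ S2, p a * F a := mul_nonneg hc.le hD2
  linarith [hS1b, hS2b]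

lemma gap_reduce {A : Type} [Fintype A] [Nonempty A]
    (p q : A → ℝ) (astar : A) (βt c : ℝ)
    (hp : ∀ a, 0 < p a)
    (hcore : ∑ a, p a * Real.exp (-(βt * (q astar - q a))) * (q astar - q a)
        ≤ c * ∑ a, p a * Real.exp (-(βt * (q astar - q a)))) :
    q astar - ∑ a, p a * Real.exp (βt * q a) / (∑ a', p a' * Real.exp (βt * q a')) * q a ≤ c := by
  set Z := ∑ a', p a' * Real.exp (βt * q a') with hZ
  have hZpos : 0 < Z := Finset.sum_pos (fun a _ => mul_pos (hp a) (Real.exp_pos _)) univ_nonempty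
  have hrw : ∑ a, p a * Real.exp (βt * q a) / Z * q a
      = (∑ a, p a * Real.exp (βt * q a) * q a) / Z := by
    have h9 : ∀ a : A, p a * Real.exp (βt * q a) / Z * q a
        = p a * Real.exp (βt * q a) * q a / Z := fun a => by ring
    rw [Finset.sum_congr rfl (fun a _ => h9 a), ← Finset.sum_div]
  have hE : ∀ a, Real.exp (βt * q a)
      = Real.exp (βt * q astar) * Real.exp (-(βt * (q astar - q a))) := by
    intro a; rw [← Real.exp_add]; congr 1; ring
  have key : q astar * Z - (∑ a, p a * Real.exp (βt * q a) * q a) ≤ c * Z := by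
    have ee1 : q astar * Z - (∑ a, p a * Real.exp (βt * q a) * q a)
        = Real.exp (βt * q astar)
          * ∑ a, p a * Real.exp (-(βt * (q astar - q a))) * (q astar - q a) := by
      rw [hZ, Finset.mul_sum, Finset.mul_sum, ← Finset.sum_sub_distrib]
      apply Finset.sum_congr rfl; intro a _
      rw [hE a]; ring
    have ee2 : c * Z = Real.exp (βt * q astar)
        * (c * ∑ a, p a * Real.exp (-(βt * (q astar - q a)))) := by
      rw [hZ, Finset.mul_sum, Finset.mul_sum, Finset.mul_sum]
      apply Finset.sum_congr rfl; intro a _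
      rw [hE a]; ring
    rw [ee1, ee2]
    exact mul_le_mul_of_nonneg_left hcore (Real.exp_pos _).le
  have heq : q astar - (∑ a, p a * Real.exp (βt * q a) * q a) / Z
      = (q astar * Z - ∑ a, p a * Real.exp (βt * q a) * q a) / Z := by
    field_simp
  rw [hrw, heq, div_le_iff₀ hZpos]
  linarith [key]

/-- The Bellman operator of a policy `π` on a finite MDP. -/
noncomputable def bellmanPolicy {S A : Type} [Fintype S] [Fintype A]
    (R : S → A → ℝ) (P : S → A → S → ℝ) (γ : ℝ) (π : S → A → ℝ)
    (Q : S × A → ℝ) : S × A → ℝ :=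
  fun p => R p.1 p.2 + γ * ∑ s', P p.1 p.2 s' * ∑ a', π s' a' * Q (s', a')

/-- The Bellman optimality operator on a finite MDP. -/
noncomputable def bellmanOpt {S A : Type} [Fintype S] [Fintype A] [Nonempty A]
    (R : S → A → ℝ) (P : S → A → S → ℝ) (γ : ℝ)
    (Q : S × A → ℝ) : S × A → ℝ :=
  fun p => R p.1 p.2 + γ * ∑ s', P p.1 p.2 s' *
    (Finset.univ.sup' Finset.univ_nonempty (fun a' => Q (s', a')))

theorem stmt_9 {S A : Type} [Fintype S] [Fintype A] [Nonempty S] [Nonempty A]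
    (R : S → A → ℝ) (P : S → A → S → ℝ) (γ : ℝ) (hγ : γ ∈ Set.Ioo (0:ℝ) 1)
    (hPpos : ∀ s a s', 0 ≤ P s a s') (hPsum : ∀ s a, ∑ s', P s a s' = 1)
    (hR : ∀ s a, R s a ∈ Set.Icc (0:ℝ) 1)
    (π : ℕ → S → A → ℝ)
    (hπ0 : ∀ s a, π 0 s a = 1 / (Fintype.card A))
    (Qpi : ℕ → S × A → ℝ)
    (hQpi : ∀ t, bellmanPolicy R P γ (π t) (Qpi t) = Qpi t)
    (β : ℕ → ℝ)
    (hπrec : ∀ t s a, π (t+1) s a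
      = π t s a * Real.exp (β t * Qpi t (s, a))
        / ∑ a', π t s a' * Real.exp (β t * Qpi t (s, a')))
    (ats : ℕ → S → A)
    (hats : ∀ t s a, Qpi t (s, a) ≤ Qpi t (s, ats t s))
    (hβ : ∀ t, β t ≥ Real.log
        (1 / (Finset.univ.inf' Finset.univ_nonempty (fun s => π t s (ats t s))))
        * γ / γ ^ (2 * t))
    (Qstar : S × A → ℝ) (hQstar : bellmanOpt R P γ Qstar = Qstar)
    (T : ℕ) :
    ‖Qstar - Qpi T‖ ≤ 3 * γ ^ T / (1 - γ) ^ 2 := by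
  classical
  obtain ⟨hγ0, hγ1⟩ := hγ
  have h1γ : 0 < 1 - γ := by linarith
  -- π t is a positive probability distribution in each state
  have hprob : ∀ t : ℕ, (∀ s a, 0 < π t s a) ∧ (∀ s : S, ∑ a, π t s a = 1) := by
    intro t
    induction t with
    | zero =>
      have hA : (0:ℝ) < Fintype.card A := by exact_mod_cast Fintype.card_pos
      constructor
      · intro s a; rw [hπ0]; positivity
      · intro s
        simp only [hπ0]
        rw [Finset.sum_const, nsmul_eq_mul, Finset.card_univ]
        field_simp
    | succ t ih =>
      have hZ : ∀ s : S, 0 < ∑ a', π t s a' * Real.exp (β t * Qpi t (s, a')) := fun s =>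
        Finset.sum_pos (fun a _ => mul_pos (ih.1 s a) (Real.exp_pos _)) univ_nonempty
      constructor
      · intro s a
        rw [hπrec]
        exact div_pos (mul_pos (ih.1 s a) (Real.exp_pos _)) (hZ s)
      · intro s
        rw [Finset.sum_congr rfl (fun a _ => hπrec t s a), ← Finset.sum_div]
        exact div_self (ne_of_gt (hZ s))
  have hπle1 : ∀ t s a, π t s a ≤ 1 := by
    intro t s a
    have h := Finset.single_le_sum (f := fun a => π t s a)
      (fun i _ => ((hprob t).1 s i).le) (mem_univ a)
    rw [(hprob t).2 s] at h
    exact h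
  -- bounds on value functions
  have hQpi_lb : ∀ t (p : S × A), 0 ≤ Qpi t p := by
    intro t p
    obtain ⟨p₀, _, hp₀⟩ := Finset.exists_min_image (univ : Finset (S × A)) (Qpi t) univ_nonempty
    have hmin : ∀ p' : S × A, Qpi t p₀ ≤ Qpi t p' := fun p' => hp₀ p' (mem_univ p')
    have e1 := (congrFun (hQpi t) p₀).symm
    simp only [bellmanPolicy] at e1
    have hinner : ∀ s', Qpi t p₀ ≤ ∑ a', π t s' a' * Qpi t (s', a') := fun s' =>
      le_wsum _ _ _ (fun a => ((hprob t).1 s' a).le) ((hprob t).2 s') (fun a => hmin (s', a))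
    have houter : Qpi t p₀ ≤ ∑ s', P p₀.1 p₀.2 s' * ∑ a', π t s' a' * Qpi t (s', a') :=
      le_wsum _ _ _ (hPpos p₀.1 p₀.2) (hPsum p₀.1 p₀.2) hinner
    have hR0 := (hR p₀.1 p₀.2).1
    have hkey : γ * Qpi t p₀ ≤ Qpi t p₀ := by
      have h2 := mul_le_mul_of_nonneg_left houter hγ0.le
      linarith [e1]
    linarith [contract_nonneg hkey hγ1, hmin p]
  have hQpi_ub : ∀ t (p : S × A), Qpi t p ≤ 1 / (1 - γ) := by
    intro t p
    obtain ⟨p₀, _, hp₀⟩ := Finset.exists_max_image (univ : Finset (S × A)) (Qpi t) univ_nonempty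
    have hmax : ∀ p' : S × A, Qpi t p' ≤ Qpi t p₀ := fun p' => hp₀ p' (mem_univ p')
    have e1 := (congrFun (hQpi t) p₀).symm
    simp only [bellmanPolicy] at e1
    have hinner : ∀ s', ∑ a', π t s' a' * Qpi t (s', a') ≤ Qpi t p₀ := fun s' =>
      wsum_le _ _ _ (fun a => ((hprob t).1 s' a).le) ((hprob t).2 s') (fun a => hmax (s', a))
    have houter : ∑ s', P p₀.1 p₀.2 s' * ∑ a', π t s' a' * Qpi t (s', a') ≤ Qpi t p₀ :=
      wsum_le _ _ _ (hPpos p₀.1 p₀.2) (hPsum p₀.1 p₀.2) hinner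
    have hR1 := (hR p₀.1 p₀.2).2
    have hkey : Qpi t p₀ ≤ 1 + γ * Qpi t p₀ := by
      have h2 := mul_le_mul_of_nonneg_left houter hγ0.le
      linarith [e1]
    have := contract_ub hkey hγ1 (by norm_num)
    linarith [hmax p]
  have hQstar_ub : ∀ p : S × A, Qstar p ≤ 1 / (1 - γ) := by
    intro p
    obtain ⟨p₀, _, hp₀⟩ := Finset.exists_max_image (univ : Finset (S × A)) Qstar univ_nonempty
    have hmax : ∀ p' : S × A, Qstar p' ≤ Qstar p₀ := fun p' => hp₀ p' (mem_univ p')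
    have e1 := (congrFun hQstar p₀).symm
    simp only [bellmanOpt] at e1
    have hinner : ∀ s', (Finset.univ.sup' Finset.univ_nonempty (fun a' => Qstar (s', a')))
        ≤ Qstar p₀ := fun s' => Finset.sup'_le _ _ (fun a _ => hmax (s', a))
    have houter : ∑ s', P p₀.1 p₀.2 s' *
        (Finset.univ.sup' Finset.univ_nonempty (fun a' => Qstar (s', a'))) ≤ Qstar p₀ :=
      wsum_le _ _ _ (hPpos p₀.1 p₀.2) (hPsum p₀.1 p₀.2) hinner
    have hR1 := (hR p₀.1 p₀.2).2
    have hkey : Qstar p₀ ≤ 1 + γ * Qstar p₀ := by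
      have h2 := mul_le_mul_of_nonneg_left houter hγ0.le
      linarith [e1]
    have := contract_ub hkey hγ1 (by norm_num)
    linarith [hmax p]
  -- Q* dominates all Qpi
  have hle : ∀ t (p : S × A), Qpi t p ≤ Qstar p := by
    intro t p
    obtain ⟨p₀, _, hp₀⟩ := Finset.exists_min_image (univ : Finset (S × A))
      (fun p => Qstar p - Qpi t p) univ_nonempty
    have hmin : ∀ p' : S × A, Qstar p₀ - Qpi t p₀ ≤ Qstar p' - Qpi t p' :=
      fun p' => hp₀ p' (mem_univ p')
    have e1 := (congrFun hQstar p₀).symm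
    simp only [bellmanOpt] at e1
    have e2 := (congrFun (hQpi t) p₀).symm
    simp only [bellmanPolicy] at e2
    have hinner : ∀ s', Qstar p₀ - Qpi t p₀ ≤
        (Finset.univ.sup' Finset.univ_nonempty (fun a' => Qstar (s', a')))
          - ∑ a', π t s' a' * Qpi t (s', a') := by
      intro s'
      have j1 : ∑ a', π t s' a' * Qstar (s', a')
          ≤ Finset.univ.sup' Finset.univ_nonempty (fun a' => Qstar (s', a')) :=
        wsum_le _ _ _ (fun a => ((hprob t).1 s' a).le) ((hprob t).2 s')
          (fun a => Finset.le_sup' (fun a' => Qstar (s', a')) (mem_univ a))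
      have j2 : ∑ a', π t s' a' * (Qpi t (s', a') + (Qstar p₀ - Qpi t p₀))
          ≤ ∑ a', π t s' a' * Qstar (s', a') :=
        Finset.sum_le_sum fun a _ =>
          mul_le_mul_of_nonneg_left (by linarith [hmin (s', a)]) ((hprob t).1 s' a).le
      have j3 : ∑ a', π t s' a' * (Qpi t (s', a') + (Qstar p₀ - Qpi t p₀))
          = (∑ a', π t s' a' * Qpi t (s', a')) + (Qstar p₀ - Qpi t p₀) := by
        simp only [mul_add, Finset.sum_add_distrib, ← Finset.sum_mul, (hprob t).2 s', one_mul]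
      linarith
    have e4 : ∑ s', P p₀.1 p₀.2 s' *
          ((Finset.univ.sup' Finset.univ_nonempty (fun a' => Qstar (s', a')))
            - ∑ a', π t s' a' * Qpi t (s', a'))
        = (∑ s', P p₀.1 p₀.2 s' *
            (Finset.univ.sup' Finset.univ_nonempty (fun a' => Qstar (s', a'))))
          - ∑ s', P p₀.1 p₀.2 s' * ∑ a', π t s' a' * Qpi t (s', a') := by
      rw [← Finset.sum_sub_distrib]
      exact Finset.sum_congr rfl fun s' _ => by ring
    have hkey : γ * (Qstar p₀ - Qpi t p₀) ≤ Qstar p₀ - Qpi t p₀ := by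
      have step1 : Qstar p₀ - Qpi t p₀ ≤ ∑ s', P p₀.1 p₀.2 s' *
          ((Finset.univ.sup' Finset.univ_nonempty (fun a' => Qstar (s', a')))
            - ∑ a', π t s' a' * Qpi t (s', a')) :=
        le_wsum _ _ _ (hPpos p₀.1 p₀.2) (hPsum p₀.1 p₀.2) hinner
      have step2 := mul_le_mul_of_nonneg_left step1 hγ0.le
      rw [e4] at step2
      have step3 : γ * ((∑ s', P p₀.1 p₀.2 s' *
            (Finset.univ.sup' Finset.univ_nonempty (fun a' => Qstar (s', a'))))
          - ∑ s', P p₀.1 p₀.2 s' * ∑ a', π t s' a' * Qpi t (s', a'))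
          = Qstar p₀ - Qpi t p₀ := by
        rw [e1, e2]; ring
      linarith
    linarith [contract_nonneg hkey hγ1, hmin p]
  -- step sizes are nonnegative
  have hminf : ∀ t, 0 < (Finset.univ.inf' Finset.univ_nonempty (fun s => π t s (ats t s)))
      ∧ (Finset.univ.inf' Finset.univ_nonempty (fun s => π t s (ats t s))) ≤ 1 := by
    intro t
    constructor
    · exact (Finset.lt_inf'_iff _).2 fun s _ => (hprob t).1 s (ats t s)
    · obtain ⟨s₀⟩ := (inferInstance : Nonempty S)
      exact le_trans (Finset.inf'_le _ (mem_univ s₀)) (hπle1 t s₀ (ats t s₀))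
  have hβ0 : ∀ t, 0 ≤ β t := by
    intro t
    refine le_trans ?_ (hβ t)
    apply div_nonneg (mul_nonneg (Real.log_nonneg ?_) hγ0.le) (pow_pos hγ0 _).le
    rw [le_div_iff₀ (hminf t).1]
    simpa using (hminf t).2
  -- soft policy improvement and monotonicity
  have hmono : ∀ t (p : S × A), Qpi t p ≤ Qpi (t+1) p := by
    intro t
    obtain ⟨p₀, _, hp₀⟩ := Finset.exists_min_image (univ : Finset (S × A))
      (fun p => Qpi (t+1) p - Qpi t p) univ_nonempty
    have hmin : ∀ p' : S × A, Qpi (t+1) p₀ - Qpi t p₀ ≤ Qpi (t+1) p' - Qpi t p' :=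
      fun p' => hp₀ p' (mem_univ p')
    have e1 := (congrFun (hQpi (t+1)) p₀).symm
    simp only [bellmanPolicy] at e1
    have e2 := (congrFun (hQpi t) p₀).symm
    simp only [bellmanPolicy] at e2
    have hinner : ∀ s', Qpi (t+1) p₀ - Qpi t p₀ ≤
        (∑ a', π (t+1) s' a' * Qpi (t+1) (s', a')) - ∑ a', π t s' a' * Qpi t (s', a') := by
      intro s'
      have i1 : ∑ a', π t s' a' * Qpi t (s', a') ≤ ∑ a', π (t+1) s' a' * Qpi t (s', a') := by
        have h := softmax_improve (fun a => π t s' a) (fun a => Qpi t (s', a)) (β t)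
          ((hprob t).1 s') ((hprob t).2 s') (hβ0 t)
        simp only [← hπrec] at h
        exact h
      have i3 : ∑ a', π (t+1) s' a' * (Qpi t (s', a') + (Qpi (t+1) p₀ - Qpi t p₀))
          ≤ ∑ a', π (t+1) s' a' * Qpi (t+1) (s', a') :=
        Finset.sum_le_sum fun a _ =>
          mul_le_mul_of_nonneg_left (by linarith [hmin (s', a)]) ((hprob (t+1)).1 s' a).le
      have i4 : ∑ a', π (t+1) s' a' * (Qpi t (s', a') + (Qpi (t+1) p₀ - Qpi t p₀))
          = (∑ a', π (t+1) s' a' * Qpi t (s', a')) + (Qpi (t+1) p₀ - Qpi t p₀) := by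
        simp only [mul_add, Finset.sum_add_distrib, ← Finset.sum_mul, (hprob (t+1)).2 s', one_mul]
      linarith
    have e4 : ∑ s', P p₀.1 p₀.2 s' *
          ((∑ a', π (t+1) s' a' * Qpi (t+1) (s', a')) - ∑ a', π t s' a' * Qpi t (s', a'))
        = (∑ s', P p₀.1 p₀.2 s' * ∑ a', π (t+1) s' a' * Qpi (t+1) (s', a'))
          - ∑ s', P p₀.1 p₀.2 s' * ∑ a', π t s' a' * Qpi t (s', a') := by
      rw [← Finset.sum_sub_distrib]
      exact Finset.sum_congr rfl fun s' _ => by ring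
    have hkey : γ * (Qpi (t+1) p₀ - Qpi t p₀) ≤ Qpi (t+1) p₀ - Qpi t p₀ := by
      have step1 : Qpi (t+1) p₀ - Qpi t p₀ ≤ ∑ s', P p₀.1 p₀.2 s' *
          ((∑ a', π (t+1) s' a' * Qpi (t+1) (s', a')) - ∑ a', π t s' a' * Qpi t (s', a')) :=
        le_wsum _ _ _ (hPpos p₀.1 p₀.2) (hPsum p₀.1 p₀.2) hinner
      have step2 := mul_le_mul_of_nonneg_left step1 hγ0.le
      rw [e4] at step2
      have step3 : γ * ((∑ s', P p₀.1 p₀.2 s' * ∑ a', π (t+1) s' a' * Qpi (t+1) (s', a'))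
          - ∑ s', P p₀.1 p₀.2 s' * ∑ a', π t s' a' * Qpi t (s', a'))
          = Qpi (t+1) p₀ - Qpi t p₀ := by
        rw [e1, e2]; ring
      linarith
    intro p
    linarith [contract_nonneg hkey hγ1, hmin p]
  -- the gap bound
  have hgap : ∀ t s, Qpi t (s, ats t s) - ∑ a, π (t+1) s a * Qpi t (s, a) ≤ γ^(2*t)/γ := by
    intro t s
    have hcpos : 0 < γ^(2*t)/γ := by positivity
    have hrw : ∀ a, π (t+1) s a * Qpi t (s, a)
        = π t s a * Real.exp (β t * Qpi t (s, a))
            / (∑ a', π t s a' * Real.exp (β t * Qpi t (s, a'))) * Qpi t (s, a) := by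
      intro a; rw [hπrec]
    rw [Finset.sum_congr rfl (fun a _ => hrw a)]
    apply gap_reduce (fun a => π t s a) (fun a => Qpi t (s, a)) (ats t s) (β t) _
      ((hprob t).1 s)
    -- core inequality
    rcases eq_or_lt_of_le (hminf t).2 with hm1 | hm1
    · -- degenerate case: the inf of the argmax-probabilities is 1
      have hstar1 : (1:ℝ) ≤ π t s (ats t s) := by
        rw [← hm1]; exact Finset.inf'_le _ (mem_univ s)
      have hall : ∀ a : A, Qpi t (s, ats t s) - Qpi t (s, a) = 0 := by
        intro a
        by_cases ha : a = ats t s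
        · rw [ha]; ring
        · exfalso
          have hpair : π t s a + π t s (ats t s) ≤ ∑ a', π t s a' := by
            rw [← Finset.sum_pair ha]
            exact Finset.sum_le_sum_of_subset_of_nonneg (subset_univ _)
              (fun i _ _ => ((hprob t).1 s i).le)
          rw [(hprob t).2 s] at hpair
          linarith [(hprob t).1 s a]
      have hz : ∀ a : A, π t s a * Real.exp (-(β t * (Qpi t (s, ats t s) - Qpi t (s, a))))
          * (Qpi t (s, ats t s) - Qpi t (s, a)) = 0 := by
        intro a; rw [hall a]; ring
      rw [Finset.sum_congr rfl (fun a _ => hz a), Finset.sum_const, smul_zero]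
      apply mul_nonneg hcpos.le
      exact Finset.sum_nonneg fun a _ =>
        mul_nonneg ((hprob t).1 s a).le (Real.exp_pos _).le
    · -- main case
      apply core_gap (fun a => π t s a) (fun a => Qpi t (s, ats t s) - Qpi t (s, a))
        (ats t s) (β t) (γ^(2*t)/γ)
        (Finset.univ.inf' Finset.univ_nonempty (fun s => π t s (ats t s)))
        (Real.log (1 / (Finset.univ.inf' Finset.univ_nonempty (fun s => π t s (ats t s)))))
        ((hprob t).1 s) ((hprob t).2 s)
        (fun a => sub_nonneg.2 (hats t s a)) (sub_self _)
        hcpos (hminf t).1 hm1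
        (Finset.inf'_le _ (mem_univ s)) rfl ?_
      have h2 : Real.log (1 / (Finset.univ.inf' Finset.univ_nonempty (fun s => π t s (ats t s))))
            / (γ^(2*t)/γ)
          = Real.log (1 / (Finset.univ.inf' Finset.univ_nonempty (fun s => π t s (ats t s))))
            * γ / γ^(2*t) := by
        rw [div_div_eq_mul_div]
      rw [h2]
      exact hβ t
  -- the distance to optimality
  obtain ⟨δ, hδdef⟩ : ∃ δ : ℕ → ℝ, ∀ t, δ t
      = (univ : Finset (S × A)).sup' univ_nonempty (fun p => Qstar p - Qpi t p) :=
    ⟨_, fun _ => rfl⟩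
  have hδle : ∀ t (p : S × A), Qstar p - Qpi t p ≤ δ t := by
    intro t p; rw [hδdef]; exact Finset.le_sup' (fun p => Qstar p - Qpi t p) (mem_univ p)
  have hδub : ∀ t, δ t ≤ 1/(1-γ) := by
    intro t; rw [hδdef]; apply Finset.sup'_le; intro p _
    have h1 := hQstar_ub p; have h2 := hQpi_lb t p; linarith
  -- the recursion
  have hrec : ∀ t, δ (t+1) ≤ γ * δ t + γ * min (γ^(2*t)/γ) (1/(1-γ)) := by
    intro t
    rw [hδdef]
    apply Finset.sup'_le
    intro p _
    have e1 := (congrFun hQstar p).symm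
    simp only [bellmanOpt] at e1
    have e2 := (congrFun (hQpi (t+1)) p).symm
    simp only [bellmanPolicy] at e2
    have hinner : ∀ s', (Finset.univ.sup' Finset.univ_nonempty (fun a' => Qstar (s', a')))
        - (∑ a', π (t+1) s' a' * Qpi (t+1) (s', a'))
        ≤ δ t + min (γ^(2*t)/γ) (1/(1-γ)) := by
      intro s'
      have i1 : (Finset.univ.sup' Finset.univ_nonempty (fun a' => Qstar (s', a')))
          ≤ Qpi t (s', ats t s') + δ t := by
        apply Finset.sup'_le
        intro a _
        have h1 := hδle t (s', a)
        have h2 := hats t s' a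
        linarith
      have i2 : Qpi t (s', ats t s')
          ≤ (∑ a', π (t+1) s' a' * Qpi t (s', a')) + min (γ^(2*t)/γ) (1/(1-γ)) := by
        have g1 := hgap t s'
        have g2 : Qpi t (s', ats t s') - ∑ a', π (t+1) s' a' * Qpi t (s', a') ≤ 1/(1-γ) := by
          have u1 := hQpi_ub t (s', ats t s')
          have u2 : 0 ≤ ∑ a', π (t+1) s' a' * Qpi t (s', a') :=
            Finset.sum_nonneg fun a _ =>
              mul_nonneg ((hprob (t+1)).1 s' a).le (hQpi_lb t (s', a))
          linarith
        have := le_min g1 g2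
        linarith
      have i3 : ∑ a', π (t+1) s' a' * Qpi t (s', a')
          ≤ ∑ a', π (t+1) s' a' * Qpi (t+1) (s', a') :=
        Finset.sum_le_sum fun a _ =>
          mul_le_mul_of_nonneg_left (hmono t (s', a)) ((hprob (t+1)).1 s' a).le
      linarith
    have e4 : ∑ s', P p.1 p.2 s' *
          ((Finset.univ.sup' Finset.univ_nonempty (fun a' => Qstar (s', a')))
            - ∑ a', π (t+1) s' a' * Qpi (t+1) (s', a'))
        = (∑ s', P p.1 p.2 s' *
            (Finset.univ.sup' Finset.univ_nonempty (fun a' => Qstar (s', a'))))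
          - ∑ s', P p.1 p.2 s' * ∑ a', π (t+1) s' a' * Qpi (t+1) (s', a') := by
      rw [← Finset.sum_sub_distrib]
      exact Finset.sum_congr rfl fun s' _ => by ring
    have step1 : ∑ s', P p.1 p.2 s' *
          ((Finset.univ.sup' Finset.univ_nonempty (fun a' => Qstar (s', a')))
            - ∑ a', π (t+1) s' a' * Qpi (t+1) (s', a'))
        ≤ δ t + min (γ^(2*t)/γ) (1/(1-γ)) :=
      wsum_le _ _ _ (hPpos p.1 p.2) (hPsum p.1 p.2) hinner
    have step2 := mul_le_mul_of_nonneg_left step1 hγ0.le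
    rw [e4] at step2
    have step3 : γ * ((∑ s', P p.1 p.2 s' *
          (Finset.univ.sup' Finset.univ_nonempty (fun a' => Qstar (s', a'))))
        - ∑ s', P p.1 p.2 s' * ∑ a', π (t+1) s' a' * Qpi (t+1) (s', a'))
        = Qstar p - Qpi (t+1) p := by
      rw [e1, e2]; ring
    have step4 : γ * (δ t + min (γ^(2*t)/γ) (1/(1-γ)))
        = γ * δ t + γ * min (γ^(2*t)/γ) (1/(1-γ)) := by ring
    linarith
  -- the induction
  have hind : ∀ n : ℕ, δ (n+1) ≤ γ^(n+1)/(1-γ) + γ^n * min 1 (γ/(1-γ))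
      + γ^(n+1) * (1 - γ^n)/(1-γ) := by
    intro n
    induction n with
    | zero =>
      have h1 := hrec 0
      have h2 : γ * min (γ^(2*0)/γ) (1/(1-γ)) ≤ min 1 (γ/(1-γ)) := by
        apply le_min
        · calc γ * min (γ^(2*0)/γ) (1/(1-γ)) ≤ γ * (γ^(2*0)/γ) :=
              mul_le_mul_of_nonneg_left (min_le_left _ _) hγ0.le
            _ = 1 := by
              rw [mul_comm, pow_zero]
              field_simp
        · calc γ * min (γ^(2*0)/γ) (1/(1-γ)) ≤ γ * (1/(1-γ)) :=
              mul_le_mul_of_nonneg_left (min_le_right _ _) hγ0.le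
            _ = γ/(1-γ) := by ring
      have h3 : γ * δ 0 ≤ γ * (1/(1-γ)) := mul_le_mul_of_nonneg_left (hδub 0) hγ0.le
      have h4 : γ * (1/(1-γ)) = γ/(1-γ) := by ring
      show δ (0+1) ≤ γ^1/(1-γ) + γ^0 * min 1 (γ/(1-γ)) + γ^1 * (1 - γ^0)/(1-γ)
      rw [pow_one, pow_zero]
      have h6 : γ * (1 - 1)/(1-γ) = 0 := by ring
      linarith [h1, h2, h3]
    | succ n ih =>
      have h1 := hrec (n+1)
      have h2 : γ * min (γ^(2*(n+1))/γ) (1/(1-γ)) ≤ γ^(2*n+2) := by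
        calc γ * min (γ^(2*(n+1))/γ) (1/(1-γ)) ≤ γ * (γ^(2*(n+1))/γ) :=
            mul_le_mul_of_nonneg_left (min_le_left _ _) hγ0.le
          _ = γ^(2*n+2) := by
            field_simp
            ring
      have h3 := mul_le_mul_of_nonneg_left ih hγ0.le
      have h4 : γ * (γ^(n+1)/(1-γ) + γ^n * min 1 (γ/(1-γ)) + γ^(n+1) * (1 - γ^n)/(1-γ))
            + γ^(2*n+2)
          = γ^(n+1+1)/(1-γ) + γ^(n+1) * min 1 (γ/(1-γ))
            + γ^(n+1+1) * (1 - γ^(n+1))/(1-γ) := by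
        field_simp
        ring
      linarith
  -- conclusion
  rw [pi_norm_le_iff_of_nonneg (by positivity)]
  intro p
  have habs : ‖(Qstar - Qpi T) p‖ = Qstar p - Qpi T p := by
    simp only [Pi.sub_apply, Real.norm_eq_abs]
    exact abs_of_nonneg (sub_nonneg.2 (hle T p))
  rw [habs]
  refine le_trans (hδle T p) ?_
  cases T with
  | zero =>
    refine le_trans (hδub 0) ?_
    rw [pow_zero, div_le_div_iff₀ h1γ (by positivity)]
    nlinarith [mul_pos h1γ (show (0:ℝ) < 2 + γ by linarith)]
  | succ n =>
    refine le_trans (hind n) ?_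
    have hkey : min 1 (γ/(1-γ)) ≤ γ*(1+2*γ)/(1-γ)^2 := by
      rcases le_total γ (1-γ) with h | h
      · refine le_trans (min_le_right _ _) ?_
        rw [div_le_div_iff₀ h1γ (by positivity)]
        nlinarith [mul_nonneg (mul_nonneg hγ0.le h1γ.le) hγ0.le]
      · refine le_trans (min_le_left _ _) ?_
        rw [le_div_iff₀ (by positivity)]
        nlinarith [hγ0, h1γ]
    have hpn : (0:ℝ) ≤ γ^n := pow_nonneg hγ0.le n
    have hpn1 : (0:ℝ) ≤ γ^(n+1) := pow_nonneg hγ0.le (n+1)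
    have h5a : γ^(n+1) * (1-γ^n) ≤ γ^(n+1) * 1 :=
      mul_le_mul_of_nonneg_left (by nlinarith [hpn]) hpn1
    have h5 : γ^(n+1) * (1-γ^n)/(1-γ) ≤ γ^(n+1)/(1-γ) := by
      rw [div_le_div_iff₀ h1γ h1γ]
      have := mul_le_mul_of_nonneg_right h5a h1γ.le
      linarith [this]
    have h6 : γ^n * min 1 (γ/(1-γ)) ≤ γ^n * (γ*(1+2*γ)/(1-γ)^2) :=
      mul_le_mul_of_nonneg_left hkey hpn
    have h7 : γ^(n+1)/(1-γ) + γ^n * (γ*(1+2*γ)/(1-γ)^2) + γ^(n+1)/(1-γ)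
        = 3*γ^(n+1)/(1-γ)^2 := by
      field_simp
      ring
    linarith
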